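/- Let ∇ ⊂ ℝ^d be a d-dimensional Gorenstein polytope of index r, and let m be the unique interior lattice point of r∇. If Conv(n_1, …, n_r) and Conv(n'_1, …, n'_r) are special (r−1)-simplices of ∇, then n_1 + ⋯ + n_r = n'_1 + ⋯ + n'_r = m; in particular, all special (r−1)-simplices of ∇ have the same barycenter m/r. -/

import Mathlib

open Pointwise

noncomputable section

/-- A point of `ℝ^n` all of whose coordinates are integers (a lattice point of `ℤ^n`). -/
def IsLatticePt {n : ℕ} (x : Fin n → ℝ) : Prop := ∀ k, ∃ m : ℤ, x k = (m : ℝ)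

/-- A lattice polytope: the convex hull of finitely many lattice points. -/
def IsLatticePoly {n : ℕ} (P : Set (Fin n → ℝ)) : Prop :=
  ∃ V : Finset (Fin n → ℝ), V.Nonempty ∧ (∀ v ∈ V, IsLatticePt v) ∧
    P = convexHull ℝ (V : Set (Fin n → ℝ))

/-- The standard inner product pairing on `ℝ^n`. -/
def pairR {n : ℕ} (x y : Fin n → ℝ) : ℝ := ∑ k, x k * y k

/-- The dual polytope `P* = {y : ⟨x,y⟩ ≥ -1 ∀ x ∈ P}`. -/
def dualPoly {n : ℕ} (P : Set (Fin n → ℝ)) : Set (Fin n → ℝ) :=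
  {y | ∀ x ∈ P, -1 ≤ pairR x y}

/-- A reflexive polytope: a lattice polytope with `0` in its interior whose dual
polytope is again a lattice polytope. -/
def IsReflexivePoly {n : ℕ} (P : Set (Fin n → ℝ)) : Prop :=
  IsLatticePoly P ∧ (0 : Fin n → ℝ) ∈ interior P ∧ IsLatticePoly (dualPoly P)

/-- The dimension of a polytope: the dimension of the direction of its affine span. -/
def polyDim {n : ℕ} (P : Set (Fin n → ℝ)) : ℕ :=
  Module.finrank ℝ (affineSpan ℝ P).direction

/-- A (full-dimensional) Gorenstein polytope of index `r`: `rP` has `m` as its unique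
interior lattice point and `rP - m` is reflexive. -/
def IsGorensteinPoly {n : ℕ} (P : Set (Fin n → ℝ)) (r : ℕ) (m : Fin n → ℝ) : Prop :=
  IsLatticePoly P ∧ IsLatticePt m ∧
  (∀ x, IsLatticePt x → (x ∈ interior ((r : ℝ) • P) ↔ x = m)) ∧
  IsReflexivePoly ((fun x => x - m) '' ((r : ℝ) • P))

/-- `y` is a point of the lattice dual to the (saturated) lattice `ℤ^n ∩ W` inside `W`. -/
def IsDualLatticePt {n : ℕ} (W : Submodule ℝ (Fin n → ℝ)) (y : Fin n → ℝ) : Prop :=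
  y ∈ W ∧ ∀ x ∈ W, IsLatticePt x → ∃ m : ℤ, pairR x y = (m : ℝ)

/-- Reflexivity of a (possibly lower-dimensional) lattice polytope inside its linear
span: `0` is in the relative interior and the dual polytope taken inside the linear
span is a lattice polytope with respect to the dual lattice. -/
def IsReflexiveIn {n : ℕ} (P : Set (Fin n → ℝ)) : Prop :=
  IsLatticePoly P ∧ (0 : Fin n → ℝ) ∈ intrinsicInterior ℝ P ∧
  ∃ V : Finset (Fin n → ℝ), V.Nonempty ∧
    (∀ v ∈ V, IsDualLatticePt (Submodule.span ℝ P) v) ∧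
    {y | y ∈ Submodule.span ℝ P ∧ ∀ x ∈ P, -1 ≤ pairR x y} =
      convexHull ℝ (V : Set (Fin n → ℝ))

/-- Gorenstein polytope of index `r` (possibly lower-dimensional): `rP` has `m` as its
unique relative-interior lattice point and `rP - m` is reflexive within its span. -/
def IsGorensteinIn {n : ℕ} (P : Set (Fin n → ℝ)) (r : ℕ) (m : Fin n → ℝ) : Prop :=
  IsLatticePoly P ∧ IsLatticePt m ∧
  (∀ x, IsLatticePt x → (x ∈ intrinsicInterior ℝ ((r : ℝ) • P) ↔ x = m)) ∧
  IsReflexiveIn ((fun x => x - m) '' ((r : ℝ) • P))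

/-- The Minkowski sum `Δ 0 + ⋯ + Δ (r-1)` of a family of sets. -/
def minkSum {n r : ℕ} (Δ : Fin r → Set (Fin n → ℝ)) : Set (Fin n → ℝ) :=
  {x | ∃ f : Fin r → (Fin n → ℝ), (∀ i, f i ∈ Δ i) ∧ x = ∑ i, f i}

/-- The Minkowski sum `Σ_{i ∈ I} Δ i`. -/
def minkSumOver {n r : ℕ} (I : Finset (Fin r)) (Δ : Fin r → Set (Fin n → ℝ)) :
    Set (Fin n → ℝ) :=
  {x | ∃ f : Fin r → (Fin n → ℝ), (∀ i ∈ I, f i ∈ Δ i) ∧ x = ∑ i ∈ I, f i}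

/-- The point `x × e_i ∈ ℝ^d × ℝ^r`. -/
def cayleyPt {d r : ℕ} (x : Fin d → ℝ) (i : Fin r) : Fin (d + r) → ℝ :=
  Fin.append x (fun j => if j = i then 1 else 0)

/-- The Cayley polytope `Δ 0 * ⋯ * Δ (r-1) ⊂ ℝ^d × ℝ^r`. -/
def cayley {d r : ℕ} (Δ : Fin r → Set (Fin d → ℝ)) : Set (Fin (d + r) → ℝ) :=
  convexHull ℝ (⋃ i, (fun x => cayleyPt x i) '' Δ i)

/-- `F` is a facet of `P`: a nonempty exposed face of dimension one less. -/
def IsFacetOf {n : ℕ} (F P : Set (Fin n → ℝ)) : Prop :=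
  IsExposed ℝ P F ∧ F.Nonempty ∧ polyDim F + 1 = polyDim P

/-- A special `(r-1)`-simplex of `P`: `r` affinely independent lattice points of `P`
such that every facet of `P` contains exactly `r - 1` of them. -/
def IsSpecialSimplex {n : ℕ} (P : Set (Fin n → ℝ)) (r : ℕ) (v : Fin r → Fin n → ℝ) : Prop :=
  (∀ i, IsLatticePt (v i) ∧ v i ∈ P) ∧ AffineIndependent ℝ v ∧
  ∀ F, IsFacetOf F P → ∃! i, v i ∉ F

/-- `∇_i = {y : ⟨x,y⟩ ≥ -δ_{ij} ∀ x ∈ Δ_j ∀ j}`, the polytopes of the dual nef-partition. -/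
def nefDual {d r : ℕ} (Δ : Fin r → Set (Fin d → ℝ)) (i : Fin r) : Set (Fin d → ℝ) :=
  {y | ∀ j, ∀ x ∈ Δ j, -(if i = j then (1 : ℝ) else 0) ≤ pairR x y}

/-- A centered nef-partition: lattice polytopes containing `0` whose Minkowski sum is a
reflexive polytope with `0` as its unique interior lattice point. -/
def IsCenteredNefPartition {d r : ℕ} (Δ : Fin r → Set (Fin d → ℝ)) : Prop :=
  (∀ i, IsLatticePoly (Δ i) ∧ (0 : Fin d → ℝ) ∈ Δ i) ∧
  IsReflexivePoly (minkSum Δ) ∧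
  ∀ x, IsLatticePt x → x ∈ interior (minkSum Δ) → x = 0

/-- Two centered nef-partitions dual to each other. -/
def AreDualNefPartitions {d r : ℕ} (Δ Nb : Fin r → Set (Fin d → ℝ)) : Prop :=
  IsCenteredNefPartition Δ ∧ IsCenteredNefPartition Nb ∧
  (∀ i, Nb i = nefDual Δ i) ∧ (∀ i, Δ i = nefDual Nb i)

/-- A Gorenstein cone with its distinguished lattice point `nσ`: a full-dimensional cone
generated by finitely many lattice points on the hyperplane `⟨·, nσ⟩ = 1`. -/
def IsGorensteinCone {n : ℕ} (σ : Set (Fin n → ℝ)) (nσ : Fin n → ℝ) : Prop :=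
  IsLatticePt nσ ∧ Submodule.span ℝ σ = ⊤ ∧
  ∃ V : Finset (Fin n → ℝ), V.Nonempty ∧
    (∀ v ∈ V, IsLatticePt v ∧ pairR v nσ = 1) ∧
    σ = {x | ∃ c : (Fin n → ℝ) → ℝ, (∀ v, 0 ≤ c v) ∧ x = ∑ v ∈ V, c v • v}

/-- The dual cone. -/
def dualCone {n : ℕ} (σ : Set (Fin n → ℝ)) : Set (Fin n → ℝ) :=
  {y | ∀ x ∈ σ, 0 ≤ pairR x y}

/-- Integrally closed lattice polytope: every lattice point of `k • P` is a sum of `k`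
lattice points of `P`. -/
def IntegrallyClosed {n : ℕ} (P : Set (Fin n → ℝ)) : Prop :=
  ∀ (k : ℕ) (x : Fin n → ℝ), IsLatticePt x → x ∈ (k : ℝ) • P →
    ∃ v : Fin k → (Fin n → ℝ), (∀ j, IsLatticePt (v j) ∧ v j ∈ P) ∧ x = ∑ j, v j


section AuxBarycenter
open Finset Module

lemma isLatticePt_sum {n r : ℕ} (u : Fin r → Fin n → ℝ)
    (h : ∀ i, IsLatticePt (u i)) : IsLatticePt (∑ i, u i) := by
  refine Finset.sum_induction u IsLatticePt (fun a b ha hb k => ?_) (fun k => ⟨0, by simp⟩)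
    (fun i _ => h i)
  obtain ⟨ma, hma⟩ := ha k; obtain ⟨mb, hmb⟩ := hb k
  exact ⟨ma + mb, by simp [hma, hmb]⟩

lemma aux_hull_le {d : ℕ} {V : Finset (Fin d → ℝ)} (hV : V.Nonempty)
    (f : (Fin d → ℝ) →ₗ[ℝ] ℝ) {x : Fin d → ℝ}
    (hx : x ∈ convexHull ℝ (V : Set (Fin d → ℝ))) :
    f x ≤ V.sup' hV f := by
  have h : convexHull ℝ (V : Set (Fin d → ℝ)) ⊆ {y | f y ≤ V.sup' hV f} :=
    convexHull_min (fun v hv => Finset.le_sup' f hv) (convex_halfSpace_le f.isLinear _)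
  exact h hx

lemma aux_hull_const {d : ℕ} {S : Finset (Fin d → ℝ)}
    (g : (Fin d → ℝ) →ₗ[ℝ] ℝ) (c : ℝ) (hc : ∀ v ∈ S, g v = c) {x : Fin d → ℝ}
    (hx : x ∈ convexHull ℝ (S : Set (Fin d → ℝ))) : g x = c := by
  have h : convexHull ℝ (S : Set (Fin d → ℝ)) ⊆ {y | g y = c} :=
    convexHull_min (fun v hv => hc v hv) (convex_hyperplane g.isLinear _)
  exact h hx

lemma aux_mem_face_hull {d : ℕ} {V : Finset (Fin d → ℝ)}
    (f : (Fin d → ℝ) →ₗ[ℝ] ℝ) (M : ℝ) (hle : ∀ v ∈ V, f v ≤ M) {x : Fin d → ℝ}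
    (hx : x ∈ convexHull ℝ (V : Set (Fin d → ℝ))) (hfx : f x = M) :
    x ∈ convexHull ℝ ((V.filter (fun v => f v = M) : Finset (Fin d → ℝ)) :
      Set (Fin d → ℝ)) := by
  rw [Finset.convexHull_eq] at hx ⊢
  obtain ⟨w, hw0, hw1, hwx⟩ := hx
  rw [Finset.centerMass_eq_of_sum_1 _ _ hw1] at hwx
  have hzero : ∀ v ∈ V, v ∉ V.filter (fun v => f v = M) → w v = 0 := by
    intro v hv hvn
    by_contra hwv
    have hwvpos : 0 < w v := lt_of_le_of_ne (hw0 v hv) (Ne.symm hwv)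
    have hvlt : f v < M := lt_of_le_of_ne (hle v hv) (by simpa [hv] using hvn)
    have hlt : ∑ y ∈ V, w y * f y < ∑ y ∈ V, w y * M := by
      refine Finset.sum_lt_sum (fun y hy => ?_) ⟨v, hv, ?_⟩
      · exact mul_le_mul_of_nonneg_left (hle y hy) (hw0 y hy)
      · exact (mul_lt_mul_iff_right₀ hwvpos).2 hvlt
    have hfx' : M = ∑ y ∈ V, w y * f y := by
      rw [← hfx, ← hwx]; simp [map_sum, map_smul, smul_eq_mul]
    rw [← Finset.sum_mul, hw1, one_mul] at hlt
    linarith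
  have hsub := Finset.filter_subset (fun v => f v = M) V
  refine ⟨w, fun y hy => hw0 y (hsub hy), ?_, ?_⟩
  · rw [← hw1]
    exact (Finset.sum_subset hsub (fun v hv hn => hzero v hv hn)).symm ▸ rfl
  · rw [Finset.centerMass_eq_of_sum_1]
    · rw [← hwx]
      refine Finset.sum_subset hsub (fun v hv hn => by simp [hzero v hv hn])
    · rw [← hw1]
      exact Finset.sum_subset hsub (fun v hv hn => hzero v hv hn)

lemma aux_step {d r : ℕ} (V : Finset (Fin d → ℝ)) (hV : V.Nonempty)
    (u : Fin r → Fin d → ℝ)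
    (f g : (Fin d → ℝ) →ₗ[ℝ] ℝ) (hg : g ∉ Submodule.span ℝ {f}) (c : ℝ)
    (hfu : ∀ i, f (u i) = V.sup' hV f)
    (hgS : ∀ v ∈ V, f v = V.sup' hV f → g v = c)
    (hgu : ∀ i, g (u i) = c)
    (hex : ∃ v ∈ V, c < g v) :
    ∃ f' : (Fin d → ℝ) →ₗ[ℝ] ℝ, f' ≠ 0 ∧ (∀ i, f' (u i) = V.sup' hV f') ∧
      (V.filter (fun v => f v = V.sup' hV f)).card
        < (V.filter (fun v => f' v = V.sup' hV f')).card := by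
  classical
  set M := V.sup' hV f with hM
  set T := V.filter (fun v => c < g v) with hT
  have hTne : T.Nonempty := by
    obtain ⟨v, hv, hcv⟩ := hex; exact ⟨v, by simp [hT, hv, hcv]⟩
  set t := T.inf' hTne (fun v => (M - f v) / (g v - c)) with ht
  have hTprop : ∀ v ∈ T, c < g v ∧ v ∈ V ∧ f v < M := by
    intro v hv
    rw [hT, Finset.mem_filter] at hv
    refine ⟨hv.2, hv.1, lt_of_le_of_ne (Finset.le_sup' f hv.1) ?_⟩
    intro hfv
    exact absurd (hgS v hv.1 hfv) (by linarith [hv.2])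
  have htpos : 0 < t := by
    rw [ht, Finset.lt_inf'_iff]
    intro v hv
    obtain ⟨h1, h2, h3⟩ := hTprop v hv
    exact div_pos (by linarith) (by linarith)
  set f' := f + t • g with hf'
  set M' := M + t * c with hM'
  have hub : ∀ v ∈ V, f' v ≤ M' := by
    intro v hv
    by_cases hc : c < g v
    · have hvT : v ∈ T := by simp [hT, hv, hc]
      have hle := Finset.inf'_le (fun v => (M - f v) / (g v - c)) hvT
      rw [← ht] at hle
      have := (le_div_iff₀ (by linarith : (0:ℝ) < g v - c)).1 hle
      simp only [hf', LinearMap.add_apply, LinearMap.smul_apply, smul_eq_mul, hM']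
      nlinarith
    · push_neg at hc
      have := Finset.le_sup' f hv
      simp only [hf', LinearMap.add_apply, LinearMap.smul_apply, smul_eq_mul, hM']
      nlinarith
  obtain ⟨s0, hs0V, hs0⟩ := Finset.exists_mem_eq_sup' hV f
  have hgs0 : g s0 = c := hgS s0 hs0V hs0.symm
  have hf's0 : f' s0 = M' := by
    simp [hf', hM', ← hs0, hgs0, mul_comm, hM]
  have hsup' : V.sup' hV f' = M' := by
    refine le_antisymm (Finset.sup'_le hV f' hub) ?_
    rw [← hf's0]; exact Finset.le_sup' f' hs0V
  obtain ⟨vh, hvhT, hvh⟩ := Finset.exists_mem_eq_inf' hTne (fun v => (M - f v) / (g v - c))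
  obtain ⟨hc1, hc2, hc3⟩ := hTprop vh hvhT
  have hf'vh : f' vh = M' := by
    have hgc : g vh - c ≠ 0 := by linarith
    have htt : t * (g vh - c) = M - f vh := by
      rw [ht, hvh, div_mul_cancel₀ _ hgc]
    simp only [hf', LinearMap.add_apply, LinearMap.smul_apply, smul_eq_mul, hM']
    nlinarith
  refine ⟨f', ?_, ?_, ?_⟩
  · intro h0
    apply hg
    have h2 : t • g = -f := by
      rw [hf'] at h0
      exact eq_neg_of_add_eq_zero_left (by rw [add_comm]; exact h0)
    have h3 : g = t⁻¹ • (t • g) := (inv_smul_smul₀ htpos.ne' g).symm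
    rw [h2, smul_neg] at h3
    rw [h3]
    exact Submodule.neg_mem _ (Submodule.smul_mem _ _ (Submodule.mem_span_singleton_self f))
  · intro i
    rw [hsup']
    simp only [hf', LinearMap.add_apply, LinearMap.smul_apply, smul_eq_mul]
    rw [hfu i, hgu i]
  · apply Finset.card_lt_card
    rw [Finset.ssubset_iff_of_subset]
    · refine ⟨vh, ?_, ?_⟩
      · rw [Finset.mem_filter, hsup']; exact ⟨hc2, hf'vh⟩
      · rw [Finset.mem_filter]
        exact fun hmem => absurd hmem.2 (ne_of_lt hc3)
    · intro v hv
      rw [Finset.mem_filter] at hv ⊢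
      rw [hsup']
      refine ⟨hv.1, ?_⟩
      have hgv := hgS v hv.1 hv.2
      simp only [hf', LinearMap.add_apply, LinearMap.smul_apply, smul_eq_mul, hM', hv.2, hgv]

lemma aux_vectorSpan_le_ker {d : ℕ} (S : Finset (Fin d → ℝ))
    (f : (Fin d → ℝ) →ₗ[ℝ] ℝ) (M : ℝ) (h : ∀ v ∈ S, f v = M) :
    vectorSpan ℝ (S : Set (Fin d → ℝ)) ≤ LinearMap.ker f := by
  rw [vectorSpan_def, Submodule.span_le]
  rintro x ⟨a, ha, b, hb, rfl⟩
  simp [LinearMap.mem_ker, vsub_eq_sub, map_sub, h a ha, h b hb]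

lemma aux_annihilator_finrank {d : ℕ} (W : Subspace ℝ (Fin d → ℝ)) :
    finrank ℝ W + finrank ℝ W.dualAnnihilator = d := by
  have h1 : finrank ℝ W.dualAnnihilator = finrank ℝ ((Fin d → ℝ) ⧸ W) :=
    (LinearEquiv.finrank_eq W.quotEquivAnnihilator).symm
  rw [h1, add_comm, Submodule.finrank_quotient_add_finrank, finrank_fin_fun]

lemma aux_facet_exists {d r : ℕ} (V : Finset (Fin d → ℝ)) (hV : V.Nonempty)
    (hspan : affineSpan ℝ (V : Set (Fin d → ℝ)) = ⊤)
    (u : Fin r → Fin d → ℝ) (hu : ∀ i, u i ∈ convexHull ℝ (V : Set (Fin d → ℝ)))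
    (n : ℕ) (f : (Fin d → ℝ) →ₗ[ℝ] ℝ) (hf : f ≠ 0)
    (hfu : ∀ i, f (u i) = V.sup' hV f)
    (hn : V.card ≤ n + (V.filter (fun v => f v = V.sup' hV f)).card) :
    ∃ g : (Fin d → ℝ) →ₗ[ℝ] ℝ, g ≠ 0 ∧ (∀ i, g (u i) = V.sup' hV g) ∧
      Module.finrank ℝ (vectorSpan ℝ
        ((V.filter (fun v => g v = V.sup' hV g)) : Set (Fin d → ℝ))) + 1 = d := by
  classical
  induction n generalizing f with
  | zero =>
    exfalso
    have hS : V.filter (fun v => f v = V.sup' hV f) = V :=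
      Finset.eq_of_subset_of_card_le (Finset.filter_subset _ _) (by omega)
    have hker : vectorSpan ℝ (V : Set (Fin d → ℝ)) ≤ LinearMap.ker f := by
      have := aux_vectorSpan_le_ker (V.filter (fun v => f v = V.sup' hV f)) f (V.sup' hV f)
        (fun v hv => (Finset.mem_filter.1 hv).2)
      rwa [hS] at this
    have htop : vectorSpan ℝ (V : Set (Fin d → ℝ)) = ⊤ := by
      rw [← direction_affineSpan, hspan, AffineSubspace.direction_top]
    rw [htop, top_le_iff] at hker
    exact hf (LinearMap.ker_eq_top.1 hker)
  | succ n ih =>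
    set S := V.filter (fun v => f v = V.sup' hV f) with hSdef
    set W := vectorSpan ℝ (S : Set (Fin d → ℝ)) with hW
    by_cases hdim : Module.finrank ℝ W + 1 = d
    · exact ⟨f, hf, hfu, hdim⟩
    -- dimension of W is at most d - 2
    have hker : W ≤ LinearMap.ker f :=
      aux_vectorSpan_le_ker S f (V.sup' hV f) (fun v hv => (Finset.mem_filter.1 hv).2)
    have hWd : Module.finrank ℝ W ≠ d := by
      intro hWd
      have : W = ⊤ := Submodule.eq_top_of_finrank_eq (by rw [hWd, finrank_fin_fun])
      rw [this, top_le_iff] at hker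
      exact hf (LinearMap.ker_eq_top.1 hker)
    have hWle : Module.finrank ℝ W ≤ d := by
      have := Submodule.finrank_le W
      rwa [finrank_fin_fun] at this
    have hW2 : Module.finrank ℝ W + 2 ≤ d := by omega
    -- find g in the annihilator of W not in the span of f
    have hfA : f ∈ W.dualAnnihilator := by
      rw [Submodule.mem_dualAnnihilator]
      exact fun w hw => hker hw
    have hnotle : ¬ (W.dualAnnihilator ≤ Submodule.span ℝ {f}) := by
      intro hle
      have h1 : Module.finrank ℝ W.dualAnnihilator ≤ 1 :=
        le_trans (Submodule.finrank_mono hle) (le_of_eq (finrank_span_singleton hf))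
      have h3 := aux_annihilator_finrank W
      omega
    obtain ⟨g, hgA, hgns⟩ := SetLike.not_le_iff_exists.1 hnotle
    -- g is constant on S
    obtain ⟨s0, hs0V, hs0⟩ := Finset.exists_mem_eq_sup' hV f
    have hs0S : s0 ∈ S := Finset.mem_filter.2 ⟨hs0V, hs0.symm⟩
    set c := g s0 with hc
    have hgS : ∀ v ∈ V, f v = V.sup' hV f → g v = c := by
      intro v hv hfv
      have hvS : v ∈ S := Finset.mem_filter.2 ⟨hv, hfv⟩
      have hmem : v -ᵥ s0 ∈ W := vsub_mem_vectorSpan ℝ hvS hs0S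
      have := (Submodule.mem_dualAnnihilator g).1 hgA _ hmem
      rw [vsub_eq_sub, map_sub, sub_eq_zero] at this
      exact this
    -- g on the points u i
    have hgu : ∀ i, g (u i) = c := by
      intro i
      have hmem := aux_mem_face_hull f (V.sup' hV f) (fun v hv => Finset.le_sup' f hv)
        (hu i) (hfu i)
      exact aux_hull_const g c (fun v hv =>
        hgS v (Finset.mem_filter.1 hv).1 (Finset.mem_filter.1 hv).2) hmem
    -- g is not constant on V
    have hne : ∃ v ∈ V, g v ≠ c := by
      by_contra hall
      push_neg at hall
      apply hgns
      have hkerg : vectorSpan ℝ (V : Set (Fin d → ℝ)) ≤ LinearMap.ker g :=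
        aux_vectorSpan_le_ker V g c hall
      have htop : vectorSpan ℝ (V : Set (Fin d → ℝ)) = ⊤ := by
        rw [← direction_affineSpan, hspan, AffineSubspace.direction_top]
      rw [htop, top_le_iff] at hkerg
      rw [LinearMap.ker_eq_top.1 hkerg]
      exact Submodule.zero_mem _
    obtain ⟨v1, hv1V, hv1⟩ := hne
    have step : ∃ f' : (Fin d → ℝ) →ₗ[ℝ] ℝ, f' ≠ 0 ∧ (∀ i, f' (u i) = V.sup' hV f') ∧
        S.card < (V.filter (fun v => f' v = V.sup' hV f')).card := by
      rcases lt_or_gt_of_ne hv1 with hlt | hgt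
      · -- g v1 < c : use -g
        have hgns' : -g ∉ Submodule.span ℝ {f} := fun h =>
          hgns (by simpa using Submodule.neg_mem _ h)
        exact aux_step V hV u f (-g) hgns' (-c) hfu
          (fun v hv hfv => by simp [hgS v hv hfv])
          (fun i => by simp [hgu i])
          ⟨v1, hv1V, by simpa using hlt⟩
      · exact aux_step V hV u f g hgns c hfu hgS hgu ⟨v1, hv1V, hgt⟩
    obtain ⟨f', hf'0, hf'u, hcard⟩ := step
    exact ih f' hf'0 hf'u (by omega)

lemma aux_support {d : ℕ} (A : Set (Fin d → ℝ)) (hA : Convex ℝ A) {s : Fin d → ℝ}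
    (hs : s ∈ A) (hsn : s ∉ interior A) (hne : (interior A).Nonempty) :
    ∃ f : (Fin d → ℝ) →L[ℝ] ℝ, f ≠ 0 ∧ ∀ y ∈ A, f y ≤ f s := by
  obtain ⟨f, hf⟩ := geometric_hahn_banach_open_point hA.interior isOpen_interior hsn
  obtain ⟨a, ha⟩ := hne
  refine ⟨f, ?_, ?_⟩
  · intro h0; rw [h0] at hf; exact absurd (hf a ha) (by simp)
  · intro y hy
    by_contra hlt; push_neg at hlt
    have key : ∀ t : ℝ, t ∈ Set.Ioo (0:ℝ) 1 → t * f a + (1 - t) * f y < f s := by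
      intro t ht
      have hmem : t • a + (1 - t) • y ∈ interior A :=
        hA.combo_interior_closure_mem_interior ha (subset_closure hy) ht.1
          (by linarith [ht.2]) (by ring)
      have := hf _ hmem
      simpa [map_add, map_smul, smul_eq_mul] using this
    have htend : Filter.Tendsto (fun t : ℝ => t * f a + (1 - t) * f y)
        (nhdsWithin 0 (Set.Ioi 0)) (nhds (f y)) := by
      have hcont : Continuous (fun t : ℝ => t * f a + (1 - t) * f y) := by continuity
      have := hcont.tendsto 0
      simpa using this.mono_left nhdsWithin_le_nhds
    have hle : f y ≤ f s := by
      refine le_of_tendsto htend ?_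
      filter_upwards [Ioo_mem_nhdsGT_of_mem (Set.mem_Ico.2 ⟨le_refl 0, zero_lt_one⟩)] with t ht
      exact (key t ht).le
    linarith

end AuxBarycenter

/-- All special `(r-1)`-simplices of a `d`-dimensional Gorenstein
polytope `∇` of index `r` have vertex sum equal to `m`, the unique interior lattice
point of `r∇`; in particular they all have the same barycenter `m / r`. -/
theorem special_simplices_same_barycenter {d r : ℕ} (hr : 0 < r)
    (Nb : Set (Fin d → ℝ)) (m : Fin d → ℝ)
    (hG : IsGorensteinPoly Nb r m)
    (hd : polyDim Nb = d)
    (v w : Fin r → Fin d → ℝ)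
    (hv : IsSpecialSimplex Nb r v)
    (hw : IsSpecialSimplex Nb r w) :
    ∑ i, v i = m ∧ ∑ i, w i = m ∧
    (r : ℝ)⁻¹ • (∑ i, v i) = (r : ℝ)⁻¹ • m ∧
    (r : ℝ)⁻¹ • (∑ i, w i) = (r : ℝ)⁻¹ • m := by
  have key : ∀ u : Fin r → Fin d → ℝ, IsSpecialSimplex Nb r u → ∑ i, u i = m := by
    intro u hu
    obtain ⟨hNlat, hmlat, hint, hrefl⟩ := hG
    have hs_lat : IsLatticePt (∑ i, u i) := isLatticePt_sum u (fun i => (hu.1 i).1)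
    refine (hint _ hs_lat).mp ?_
    obtain ⟨V, hV, hVlat, hNbV⟩ := hNlat
    have hconv : Convex ℝ Nb := hNbV ▸ convex_convexHull ℝ _
    have huNb : ∀ i, u i ∈ convexHull ℝ (V : Set (Fin d → ℝ)) := fun i => hNbV ▸ (hu.1 i).2
    have hrne : (r:ℝ) ≠ 0 := Nat.cast_ne_zero.2 hr.ne'
    have hy : (r:ℝ)⁻¹ • (∑ i, u i) ∈ Nb := by
      have hsum : ∑ i : Fin r, (r:ℝ)⁻¹ • u i ∈ Nb := by
        apply hconv.sum_mem (fun i _ => by positivity) ?_ (fun i _ => (hu.1 i).2)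
        simp only [Finset.sum_const, Finset.card_univ, Fintype.card_fin, nsmul_eq_mul]
        field_simp
      simpa [Finset.smul_sum] using hsum
    have hsmem : (∑ i, u i) ∈ (r:ℝ) • Nb :=
      ⟨_, hy, by simp [smul_inv_smul₀ hrne]⟩
    by_contra hs_not
    -- the affine span of Nb (and of V) is everything
    have hspanNb : affineSpan ℝ Nb = ⊤ := by
      have hne : (affineSpan ℝ Nb : Set (Fin d → ℝ)).Nonempty := by
        refine ⟨(r:ℝ)⁻¹ • (∑ i, u i), ?_⟩
        exact subset_affineSpan ℝ Nb hy
      rw [← AffineSubspace.direction_eq_top_iff_of_nonempty hne]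
      apply Submodule.eq_top_of_finrank_eq
      rw [Module.finrank_fin_fun]
      exact hd
    have hspanV : affineSpan ℝ (V : Set (Fin d → ℝ)) = ⊤ := by
      rw [← affineSpan_convexHull, ← hNbV]
      exact hspanNb
    -- interior of r • Nb is nonempty
    have hintNb : (interior Nb).Nonempty := by
      rw [hconv.interior_nonempty_iff_affineSpan_eq_top]
      exact hspanNb
    have hC : Convex ℝ ((r:ℝ) • Nb) := hconv.smul _
    have hIntEq : interior ((r:ℝ) • Nb) = (r:ℝ) • interior Nb := interior_smul₀ hrne Nb
    have hIntNe : (interior ((r:ℝ) • Nb)).Nonempty := by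
      rw [hIntEq]; exact hintNb.smul_set
    -- supporting functional at the sum
    obtain ⟨f, hf0, hfle⟩ := aux_support _ hC hsmem hs_not hIntNe
    set fl := (f : (Fin d → ℝ) →ₗ[ℝ] ℝ) with hfl
    have hflapp : ∀ x, fl x = f x := fun x => rfl
    set M := V.sup' hV fl with hM
    have hfv_le : ∀ i, fl (u i) ≤ M := fun i => aux_hull_le hV fl (huNb i)
    have hMle : (r:ℝ) * M ≤ f (∑ i, u i) := by
      obtain ⟨s0, hs0V, hs0⟩ := Finset.exists_mem_eq_sup' hV fl
      have hs0Nb : s0 ∈ Nb := hNbV ▸ subset_convexHull ℝ _ hs0V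
      have hmem : (r:ℝ) • s0 ∈ (r:ℝ) • Nb := Set.smul_mem_smul_set hs0Nb
      have := hfle _ hmem
      rw [map_smul, smul_eq_mul] at this
      rw [hM, hs0]
      exact this
    have hsum_eq : f (∑ i, u i) = ∑ i, fl (u i) := by
      rw [map_sum]; rfl
    have hfu : ∀ i, fl (u i) = M := by
      by_contra hne
      push_neg at hne
      obtain ⟨i0, hi0⟩ := hne
      have hlt : ∑ i, fl (u i) < ∑ _i : Fin r, M :=
        Finset.sum_lt_sum (fun i _ => hfv_le i)
          ⟨i0, Finset.mem_univ _, lt_of_le_of_ne (hfv_le i0) hi0⟩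
      rw [Finset.sum_const, Finset.card_univ, Fintype.card_fin, nsmul_eq_mul] at hlt
      rw [hsum_eq] at hMle
      linarith
    have hfl0 : fl ≠ 0 := by
      intro h0
      apply hf0
      ext x
      have := congrFun (congrArg (fun (h : (Fin d → ℝ) →ₗ[ℝ] ℝ) => (h : (Fin d → ℝ) → ℝ)) h0) x
      simpa [hflapp] using this
    -- get a facet-defining functional
    obtain ⟨g, hg0, hgu, hgdim⟩ := aux_facet_exists V hV hspanV u huNb V.card fl hfl0 hfu
      (by omega)
    set Mg := V.sup' hV g with hMg
    set S := V.filter (fun v => g v = Mg) with hS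
    set F := convexHull ℝ (S : Set (Fin d → ℝ)) with hF
    have hSV : (S : Set (Fin d → ℝ)) ⊆ (V : Set (Fin d → ℝ)) :=
      Finset.coe_subset.2 (Finset.filter_subset _ _)
    have hFsubNb : F ⊆ Nb := by rw [hF, hNbV]; exact convexHull_mono hSV
    have hgF : ∀ x ∈ F, g x = Mg :=
      fun x hx => aux_hull_const g Mg (fun v hv => (Finset.mem_filter.1 hv).2) hx
    have hgNb : ∀ x ∈ Nb, g x ≤ Mg := fun x hx => aux_hull_le hV g (hNbV ▸ hx)
    obtain ⟨s0g, hs0gV, hs0g⟩ := Finset.exists_mem_eq_sup' hV g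
    have hs0gS : s0g ∈ S := Finset.mem_filter.2 ⟨hs0gV, hs0g.symm⟩
    have hs0gNb : s0g ∈ Nb := hNbV ▸ subset_convexHull ℝ _ hs0gV
    set gc := LinearMap.toContinuousLinearMap g with hgc
    have hgcapp : ∀ x, gc x = g x := fun x => rfl
    have hFeq : F = {x ∈ Nb | ∀ y ∈ Nb, gc y ≤ gc x} := by
      ext x
      constructor
      · intro hx
        refine ⟨hFsubNb hx, fun y hy => ?_⟩
        rw [hgcapp, hgcapp, hgF x hx]
        exact hgNb y hy
      · rintro ⟨hxNb, hmax⟩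
        have h1 : g x ≤ Mg := hgNb x hxNb
        have h2 : Mg ≤ g x := by
          rw [hMg, hs0g]
          exact hmax s0g hs0gNb
        exact aux_mem_face_hull g Mg (fun v hv => Finset.le_sup' g hv) (hNbV ▸ hxNb)
          (le_antisymm h1 h2)
    have hfacet : IsFacetOf F Nb := by
      refine ⟨fun _ => ⟨gc, hFeq⟩, ⟨s0g, subset_convexHull ℝ _ hs0gS⟩, ?_⟩
      have hdimF : polyDim F = Module.finrank ℝ (vectorSpan ℝ (S : Set (Fin d → ℝ))) := by
        rw [polyDim, hF, affineSpan_convexHull, direction_affineSpan]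
      rw [hdimF, hd]
      exact hgdim
    obtain ⟨i, hi, _⟩ := hu.2.2 F hfacet
    exact hi (aux_mem_face_hull g Mg (fun v hv => Finset.le_sup' g hv) (huNb i) (hgu i))
  have h1 := key v hv
  have h2 := key w hw
  exact ⟨h1, h2, by rw [h1], by rw [h2]⟩
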